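/- Let Δ be a compact geometry over a finite type set I with at least 2 elements, i.e. the vertex set V carries a compact Hausdorff topology and each flag variety V_J ⊆ V^J is closed. Define p: Cham(Δ) × |2^I| → |Δ| by p(γ, Σ_i i·ξ(i)) = Σ_i γ(i)·ξ(i), and give |Δ| the quotient topology |Δ|_K. Then |Δ|_K is a compact Hausdorff space, and it is path-connected. -/

import Mathlib

/-! Basic combinatorial infrastructure: abstract simplicial complexes, chamber
complexes, galleries, typed complexes and geometries of type `M` in the sense of Tits. -/

/-- An abstract simplicial complex on the vertex set `V`, given by its set of
(finite) faces, closed under passing to subsets. -/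
structure SComplex (V : Type*) [DecidableEq V] where
  faces : Set (Finset V)
  down_closed : ∀ ⦃s t : Finset V⦄, s ∈ faces → t ⊆ s → t ∈ faces

namespace SComplex

variable {V : Type*} [DecidableEq V] (K : SComplex V)

/-- A chamber is a maximal face. -/
def IsChamber (c : Finset V) : Prop :=
  c ∈ K.faces ∧ ∀ s ∈ K.faces, c ⊆ s → s = c

/-- A complex is pure of rank `n` if every face is contained in a chamber and every
chamber has `n` vertices. -/
def Pure (n : ℕ) : Prop :=
  (∀ s ∈ K.faces, ∃ c, K.IsChamber c ∧ s ⊆ c) ∧ ∀ c, K.IsChamber c → c.card = n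

/-- Two chambers are adjacent (in a complex of rank `n`) if they share a face of
corank at most 1. -/
def Adj (n : ℕ) (c d : Finset V) : Prop :=
  K.IsChamber c ∧ K.IsChamber d ∧ n ≤ (c ∩ d).card + 1

/-- A pure rank-`n` complex is gallery-connected if any two chambers are joined by a
gallery, i.e. by a chain of consecutively adjacent chambers. -/
def GalleryConnected (n : ℕ) : Prop :=
  ∀ c d, K.IsChamber c → K.IsChamber d → Relation.ReflTransGen (K.Adj n) c d

/-- A chamber complex of rank `n`: pure of rank `n` and gallery-connected. -/
def IsChamberComplex (n : ℕ) : Prop :=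
  K.Pure n ∧ K.GalleryConnected n

/-- Thickness: every corank-1 face lies in at least three chambers. -/
def Thick (n : ℕ) : Prop :=
  ∀ s ∈ K.faces, s.card + 1 = n →
    ∃ c₁ c₂ c₃ : Finset V, K.IsChamber c₁ ∧ K.IsChamber c₂ ∧ K.IsChamber c₃ ∧
      s ⊆ c₁ ∧ s ⊆ c₂ ∧ s ⊆ c₃ ∧ c₁ ≠ c₂ ∧ c₁ ≠ c₃ ∧ c₂ ≠ c₃

/-- The link of a simplex `α`. -/
def link (α : Finset V) : SComplex V where
  faces := {s | Disjoint α s ∧ α ∪ s ∈ K.faces}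
  down_closed := by
    intro s t hs hts
    exact ⟨hs.1.mono_right (Finset.coe_subset.2 hts |>.trans le_rfl),
      K.down_closed hs.2 (Finset.union_subset_union le_rfl hts)⟩

/-- The graph on the vertices of a complex, two vertices being adjacent when they are
joined by an edge of the complex. -/
def vertexGraph : SimpleGraph {v : V // {v} ∈ K.faces} where
  Adj u w := u ≠ w ∧ {u.1, w.1} ∈ K.faces
  symm := ⟨by
    intro u w h
    exact ⟨h.1.symm, by rw [Finset.pair_comm]; exact h.2⟩⟩
  loopless := ⟨fun u h => h.1 rfl⟩

/-- A generalized `n`-gon: a thick chamber complex of rank 2 whose vertex graph has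
girth `2n` and diameter `n`. -/
def IsGenNGon (n : ℕ) : Prop :=
  K.IsChamberComplex 2 ∧ K.Thick 2 ∧
    K.vertexGraph.egirth = (2 * n : ℕ) ∧ K.vertexGraph.ediam = (n : ℕ)

end SComplex

/-- A complex with a type function, injective on every face, with values in the finite
set `I` of types. -/
structure TypedComplex (V I : Type*) [DecidableEq V] where
  cplx : SComplex V
  typ : V → I
  typ_injOn : ∀ s ∈ cplx.faces, Set.InjOn typ ↑s

namespace TypedComplex

variable {V I : Type*} [DecidableEq V] [DecidableEq I] [Fintype I]

/-- A geometry over `I`: a thick, residually connected flag complex, pure of rank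
`card I`, with a type function. -/
def IsGeometry (Δ : TypedComplex V I) : Prop :=
  (∅ : Finset V) ∈ Δ.cplx.faces ∧
  Δ.cplx.Pure (Fintype.card I) ∧
  Δ.cplx.Thick (Fintype.card I) ∧
  (∀ s : Finset V, (∀ v ∈ s, {v} ∈ Δ.cplx.faces) →
    (∀ u ∈ s, ∀ v ∈ s, u ≠ v → ({u, v} : Finset V) ∈ Δ.cplx.faces) →
    s ∈ Δ.cplx.faces) ∧
  ∀ s ∈ Δ.cplx.faces, s.card < Fintype.card I →
    (Δ.cplx.link s).IsChamberComplex (Fintype.card I - s.card)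

/-- A geometry of type `M`, for a Coxeter matrix `M` over `I`: the link of every
corank-2 face of cotype `{i, j}` is a generalized `M i j`-gon. -/
def IsGeomOfType (Δ : TypedComplex V I) (M : CoxeterMatrix I) : Prop :=
  Δ.IsGeometry ∧
  ∀ s ∈ Δ.cplx.faces, ∀ i j : I, i ≠ j →
    s.image Δ.typ = (Finset.univ.erase i).erase j →
    (Δ.cplx.link s).IsGenNGon (M i j)

/-- Nonstammering galleries from `c` to `e` together with their type: the list of
cotypes of the consecutive intersections. -/
inductive GalleryOfType (Δ : TypedComplex V I) :
    Finset V → Finset V → List I → Prop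
  | nil {c : Finset V} (hc : Δ.cplx.IsChamber c) : GalleryOfType Δ c c []
  | cons {c d e : Finset V} {i : I} {ω : List I}
      (hc : Δ.cplx.IsChamber c) (hd : Δ.cplx.IsChamber d) (hne : c ≠ d)
      (hcot : (c ∩ d).image Δ.typ = Finset.univ.erase i)
      (hrest : GalleryOfType Δ d e ω) : GalleryOfType Δ c e (i :: ω)

end TypedComplex

/-- The restriction of a Coxeter matrix to a subset of the index set. -/
def CoxeterMatrix.restrict {B : Type*} (M : CoxeterMatrix B) (J : Set B) :
    CoxeterMatrix J where
  M := fun i j => M i.1 j.1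
  isSymm := by
    ext i j
    exact M.symmetric j.1 i.1
  diagonal i := M.diagonal i.1
  off_diagonal i j h := M.off_diagonal i.1 j.1 fun hc => h (Subtype.ext hc)

namespace TypedComplex

variable {V I : Type*} [DecidableEq V] [DecidableEq I] [Fintype I] [TopologicalSpace V]

/-- The flag variety of type `J`: simplices of type `J`, regarded (via the vertex of
each type) as functions `J → V`. -/
def flagVar (Δ : TypedComplex V I) (J : Finset I) : Set ((↥J) → V) :=
  {x | (Finset.univ.image fun j => x j) ∈ Δ.cplx.faces ∧ ∀ j : ↥J, Δ.typ (x j) = j.1}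

/-- The space of chambers, regarded as functions `I → V` picking the vertex of each
type. -/
def chamberSet (Δ : TypedComplex V I) : Set (I → V) :=
  {x | (Finset.univ.image x) ∈ Δ.cplx.faces ∧ ∀ i, Δ.typ (x i) = i}

/-- The map `p : Cham(Δ) × |2^I| → (V → ℝ)` realizing a chamber together with
barycentric coordinates as a point of the geometric realization. -/
def pFun (Δ : TypedComplex V I) :
    (↥Δ.chamberSet × ↥(stdSimplex ℝ I)) → (V → ℝ) := fun p v =>
  ∑ i : I, if p.1.1 i = v then p.2.1 i else 0

/-- Two pairs (chamber, coordinates) are identified iff they realize the same point. -/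
def coarseSetoid (Δ : TypedComplex V I) :
    Setoid (↥Δ.chamberSet × ↥(stdSimplex ℝ I)) where
  r a b := Δ.pFun a = Δ.pFun b
  iseqv := ⟨fun _ => rfl, Eq.symm, Eq.trans⟩

/-- The geometric realization `|Δ|_K` with the coarse (quotient) topology. -/
def CoarseSpace (Δ : TypedComplex V I) : Type _ := Quotient Δ.coarseSetoid

instance (Δ : TypedComplex V I) : TopologicalSpace Δ.CoarseSpace :=
  instTopologicalSpaceQuotient

end TypedComplex


/-! ### Auxiliary lemmas for Statement 6 -/


lemma quotient_t2_of_isClosed_rel {X : Type*} [TopologicalSpace X] [CompactSpace X]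
    [T2Space X] (s : Setoid X) (hR : IsClosed {p : X × X | s.r p.1 p.2}) :
    T2Space (Quotient s) := by
  set π : X → Quotient s := Quotient.mk s with hπ
  have hqm : Topology.IsQuotientMap π := isQuotientMap_quotient_mk'
  have hπeq : ∀ a b : X, π a = π b ↔ s.r a b := fun a b => Quotient.eq''
  -- the quotient map is closed
  have hclosed : IsClosedMap π := by
    intro C hC
    rw [← hqm.isClosed_preimage]
    have hsat : π ⁻¹' (π '' C) = Prod.fst '' ({p : X × X | s.r p.1 p.2} ∩ Set.univ ×ˢ C) := by
      ext a
      simp only [Set.mem_preimage, Set.mem_image, Set.mem_inter_iff, Set.mem_setOf_eq,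
        Set.mem_prod, Set.mem_univ, true_and, Prod.exists]
      constructor
      · rintro ⟨b, hb, hab⟩
        exact ⟨a, b, ⟨(hπeq a b).1 hab.symm, hb⟩, rfl⟩
      · rintro ⟨a', b, ⟨hr, hb⟩, rfl⟩
        exact ⟨b, hb, ((hπeq a' b).2 hr).symm⟩
    rw [hsat]
    exact (((hR.inter (isClosed_univ.prod hC)).isCompact).image continuous_fst).isClosed
  refine ⟨fun {q₁ q₂} hne => ?_⟩
  obtain ⟨a, rfl⟩ := Quotient.exists_rep q₁
  obtain ⟨b, rfl⟩ := Quotient.exists_rep q₂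
  have hfib : ∀ c : X, IsClosed {x : X | s.r x c} := by
    intro c
    have : {x : X | s.r x c} = (fun x => (x, c)) ⁻¹' {p : X × X | s.r p.1 p.2} := rfl
    rw [this]
    exact hR.preimage (continuous_id.prodMk continuous_const)
  have hdisj : Disjoint {x : X | s.r x a} {x : X | s.r x b} := by
    rw [Set.disjoint_left]
    intro x hxa hxb
    exact hne ((hπeq a b).2 (s.trans (s.symm hxa) hxb))
  obtain ⟨U, W, hUo, hWo, hFU, hFW, hUW⟩ := normal_separation (hfib a) (hfib b) hdisj
  refine ⟨(π '' Uᶜ)ᶜ, (π '' Wᶜ)ᶜ, (hclosed _ hUo.isClosed_compl).isOpen_compl,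
    (hclosed _ hWo.isClosed_compl).isOpen_compl, ?_, ?_, ?_⟩
  · rintro ⟨x, hx, hxa⟩
    exact hx (hFU ((hπeq x a).1 hxa))
  · rintro ⟨x, hx, hxb⟩
    exact hx (hFW ((hπeq x b).1 hxb))
  · rw [Set.disjoint_left]
    rintro q hq hq'
    obtain ⟨x, rfl⟩ := Quotient.exists_rep q
    have hxU : x ∈ U := by
      by_contra h
      exact hq ⟨x, h, rfl⟩
    have hxW : x ∈ W := by
      by_contra h
      exact hq' ⟨x, h, rfl⟩
    exact Set.disjoint_left.1 hUW hxU hxW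

lemma SComplex.ext_faces {V : Type*} [DecidableEq V] {K L : SComplex V}
    (h : K.faces = L.faces) : K = L := by
  cases K; cases L
  cases h
  rfl

namespace TypedComplex

variable {V I : Type*} [DecidableEq V] [DecidableEq I] [Fintype I] [TopologicalSpace V]

theorem pFun_eval (Δ : TypedComplex V I) (c : ↥Δ.chamberSet)
    (d : ↥Δ.chamberSet) (η : ↥(stdSimplex ℝ I)) (i : I) :
    Δ.pFun (d, η) (c.1 i) = if d.1 i = c.1 i then η.1 i else 0 := by
  unfold pFun
  refine Finset.sum_eq_single_of_mem i (Finset.mem_univ i) ?_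
  intro j _ hj
  refine if_neg fun h => hj ?_
  have := congrArg Δ.typ h
  rwa [d.2.2 j, c.2.2 i] at this

theorem pFun_eq_iff (Δ : TypedComplex V I) (a b : ↥Δ.chamberSet × ↥(stdSimplex ℝ I)) :
    Δ.pFun a = Δ.pFun b ↔
      a.2.1 = b.2.1 ∧ ∀ i, a.1.1 i ≠ b.1.1 i → a.2.1 i = 0 := by
  obtain ⟨c, ξ⟩ := a
  obtain ⟨d, η⟩ := b
  constructor
  · intro h
    have H1 : ∀ i, ξ.1 i = if d.1 i = c.1 i then η.1 i else 0 := by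
      intro i
      rw [← pFun_eval Δ c d η i, ← h, pFun_eval Δ c c ξ i, if_pos rfl]
    have H2 : ∀ i, η.1 i = if c.1 i = d.1 i then ξ.1 i else 0 := by
      intro i
      rw [← pFun_eval Δ d c ξ i, h, pFun_eval Δ d d η i, if_pos rfl]
    constructor
    · funext i
      by_cases hc : c.1 i = d.1 i
      · rw [H1 i, if_pos hc.symm]
      · rw [H1 i, if_neg fun e => hc e.symm, H2 i, if_neg hc]
    · intro i hne
      rw [H1 i, if_neg fun e => hne e.symm]
  · rintro ⟨hξη, hz⟩
    funext v
    refine Finset.sum_congr rfl fun i _ => ?_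
    by_cases h1 : c.1 i = v <;> by_cases h2 : d.1 i = v
    · rw [if_pos h1, if_pos h2, show ξ.1 i = η.1 i from congrFun hξη i]
    · rw [if_pos h1, if_neg h2, hz i (by rw [h1]; exact fun e => h2 e.symm)]
    · rw [if_neg h1, if_pos h2, ← show ξ.1 i = η.1 i from congrFun hξη i,
        hz i (by rw [h2]; exact h1)]
    · rw [if_neg h1, if_neg h2]

end TypedComplex

/-- Let `Δ` be a compact geometry over a finite type set `I` with at
least two elements: the vertex set carries a compact Hausdorff topology and every flag
variety is closed.  Then the realization `|Δ|_K` (quotient of `Cham(Δ) × |2^I|`) is a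
compact Hausdorff space, and it is path-connected. -/
theorem statement6 {V I : Type*} [DecidableEq V] [DecidableEq I] [Fintype I]
    [TopologicalSpace V] [CompactSpace V] [T2Space V]
    (Δ : TypedComplex V I) (hΔ : Δ.IsGeometry) (hI : 2 ≤ Fintype.card I)
    (hflag : ∀ J : Finset I, IsClosed (Δ.flagVar J))
    (hch : IsClosed Δ.chamberSet) :
    CompactSpace Δ.CoarseSpace ∧ T2Space Δ.CoarseSpace ∧
      PathConnectedSpace Δ.CoarseSpace := by
  classical
  obtain ⟨hempty, hpure, hthick, hflagc, hres⟩ := hΔ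
  haveI : Nonempty I := Fintype.card_pos_iff.mp (by omega)
  haveI : CompactSpace ↥Δ.chamberSet := isCompact_iff_compactSpace.mp hch.isCompact
  haveI : CompactSpace ↥(stdSimplex ℝ I) :=
    isCompact_iff_compactSpace.mp (isCompact_stdSimplex ℝ I)
  -- closedness of the relation
  have hRclosed : IsClosed {p : (↥Δ.chamberSet × ↥(stdSimplex ℝ I)) ×
      (↥Δ.chamberSet × ↥(stdSimplex ℝ I)) | Δ.coarseSetoid.r p.1 p.2} := by
    have he : {p : (↥Δ.chamberSet × ↥(stdSimplex ℝ I)) ×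
        (↥Δ.chamberSet × ↥(stdSimplex ℝ I)) | Δ.coarseSetoid.r p.1 p.2} =
        {p | p.1.2.1 = p.2.2.1} ∩
          ⋂ i : I, ({p | p.1.1.1 i = p.2.1.1 i} ∪ {p | p.1.2.1 i = 0}) := by
      ext p
      simp only [Set.mem_setOf_eq, Set.mem_inter_iff, Set.mem_iInter, Set.mem_union]
      rw [show Δ.coarseSetoid.r p.1 p.2 ↔ _ from Δ.pFun_eq_iff p.1 p.2]
      refine and_congr Iff.rfl (forall_congr' fun i => ?_)
      rw [or_iff_not_imp_left]
    rw [he]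
    refine IsClosed.inter ?_ (isClosed_iInter fun i => IsClosed.union ?_ ?_)
    · exact isClosed_eq (continuous_subtype_val.comp (continuous_snd.comp continuous_fst))
        (continuous_subtype_val.comp (continuous_snd.comp continuous_snd))
    · exact isClosed_eq
        ((continuous_apply i).comp (continuous_subtype_val.comp
          (continuous_fst.comp continuous_fst)))
        ((continuous_apply i).comp (continuous_subtype_val.comp
          (continuous_fst.comp continuous_snd)))
    · exact isClosed_eq
        ((continuous_apply i).comp (continuous_subtype_val.comp
          (continuous_snd.comp continuous_fst))) continuous_const
  -- basic facts about chamber functions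
  have hinjfun : ∀ x : ↥Δ.chamberSet, Function.Injective x.1 := by
    intro x i j h
    have := congrArg Δ.typ h
    rwa [x.2.2 i, x.2.2 j] at this
  have himg_card : ∀ x : ↥Δ.chamberSet, (Finset.univ.image x.1).card = Fintype.card I := by
    intro x
    rw [Finset.card_image_of_injective _ (hinjfun x), Finset.card_univ]
  have hchamber : ∀ x : ↥Δ.chamberSet, Δ.cplx.IsChamber (Finset.univ.image x.1) := by
    intro x
    obtain ⟨c, hc, hsub⟩ := hpure.1 _ x.2.1
    have hcard : c.card = Fintype.card I := hpure.2 c hc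
    have heq : Finset.univ.image x.1 = c :=
      Finset.eq_of_subset_of_card_le hsub (le_of_eq (by rw [hcard, himg_card x]))
    rwa [heq]
  have hfun_of_chamber : ∀ D : Finset V, Δ.cplx.IsChamber D →
      ∃ y : ↥Δ.chamberSet, Finset.univ.image y.1 = D := by
    intro D hD
    have hDf : D ∈ Δ.cplx.faces := hD.1
    have hDcard : D.card = Fintype.card I := hpure.2 D hD
    have hinj : Set.InjOn Δ.typ ↑D := Δ.typ_injOn D hDf
    have himg : D.image Δ.typ = Finset.univ := by
      apply Finset.eq_univ_of_card
      rw [Finset.card_image_of_injOn hinj, hDcard]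
    have hex : ∀ i : I, ∃ v, v ∈ D ∧ Δ.typ v = i := by
      intro i
      have : i ∈ D.image Δ.typ := by rw [himg]; exact Finset.mem_univ i
      simpa [Finset.mem_image] using this
    choose y hyD hyt using hex
    have hyface : Finset.univ.image y ⊆ D := by
      intro v hv
      obtain ⟨i, _, rfl⟩ := Finset.mem_image.1 hv
      exact hyD i
    have hyinj : Function.Injective y := by
      intro i j h
      have := congrArg Δ.typ h
      rwa [hyt i, hyt j] at this
    refine ⟨⟨y, Δ.cplx.down_closed hDf hyface, hyt⟩, ?_⟩
    apply Finset.eq_of_subset_of_card_le hyface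
    rw [hDcard, Finset.card_image_of_injective _ hyinj, Finset.card_univ]
  have huniq : ∀ x y : ↥Δ.chamberSet,
      Finset.univ.image x.1 = Finset.univ.image y.1 → x = y := by
    intro x y h
    apply Subtype.ext; funext i
    have hx : x.1 i ∈ Finset.univ.image y.1 :=
      h ▸ Finset.mem_image_of_mem _ (Finset.mem_univ i)
    obtain ⟨j, _, hj⟩ := Finset.mem_image.1 hx
    have hji : j = i := by
      have := congrArg Δ.typ hj
      rwa [y.2.2 j, x.2.2 i] at this
    rw [← hj, hji]
  -- the quotient map and paths inside a single chamber
  set π : (↥Δ.chamberSet × ↥(stdSimplex ℝ I)) → Δ.CoarseSpace :=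
    Quotient.mk Δ.coarseSetoid with hπdef
  have hπcont : Continuous π := continuous_quotient_mk'
  have hpcs : IsPathConnected (stdSimplex ℝ I) :=
    (convex_stdSimplex ℝ I).isPathConnected
      ⟨_, ite_eq_mem_stdSimplex ℝ (Classical.arbitrary I)⟩
  have hjoin_chamber : ∀ (c : ↥Δ.chamberSet) (ξ η : ↥(stdSimplex ℝ I)),
      Joined (π (c, ξ)) (π (c, η)) := by
    intro c ξ η
    have h1 : Joined (X := ↥(stdSimplex ℝ I)) ξ η := by
      have := (hpcs.joinedIn ξ.1 ξ.2 η.1 η.2).joined_subtype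
      simpa using this
    exact ⟨h1.somePath.map (f := fun t => π (c, t)) (hπcont.comp (Continuous.prodMk_right c))⟩
  -- crossing to an adjacent chamber
  have hstep : ∀ (c d : ↥Δ.chamberSet) (i₀ : I), (∀ i, i ≠ i₀ → c.1 i = d.1 i) →
      ∀ ξ η : ↥(stdSimplex ℝ I), Joined (π (c, ξ)) (π (d, η)) := by
    intro c d i₀ hcd ξ η
    obtain ⟨i₁, hi₁⟩ := Fintype.exists_ne_of_one_lt_card (by omega) i₀
    set ζ : ↥(stdSimplex ℝ I) := ⟨_, ite_eq_mem_stdSimplex ℝ i₁⟩ with hζ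
    have hmid : π (c, ζ) = π (d, ζ) := by
      apply Quotient.sound
      show Δ.pFun _ = Δ.pFun _
      rw [Δ.pFun_eq_iff]
      refine ⟨rfl, fun i hne => ?_⟩
      have hii : i = i₀ := by
        by_contra h
        exact hne (hcd i h)
      subst hii
      simp only [hζ]
      exact if_neg hi₁
    have h2 := hjoin_chamber d ζ η
    rw [← hmid] at h2
    exact (hjoin_chamber c ξ ζ).trans h2
  -- gallery connectedness of the full complex (from residual connectedness at ∅)
  have hlink : Δ.cplx.link ∅ = Δ.cplx := by
    apply SComplex.ext_faces
    ext s
    simp [SComplex.link]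
  have hGC : Δ.cplx.GalleryConnected (Fintype.card I) := by
    have h := (hres ∅ hempty (by simpa using (by omega : 0 < Fintype.card I))).2
    rwa [hlink, Finset.card_empty, Nat.sub_zero] at h
  -- the main connectivity argument
  have main : ∀ (x y : ↥Δ.chamberSet) (ξ η : ↥(stdSimplex ℝ I)),
      Joined (π (x, ξ)) (π (y, η)) := by
    intro x y ξ η
    have hgal := hGC _ _ (hchamber x) (hchamber y)
    have key : ∀ D, Relation.ReflTransGen (Δ.cplx.Adj (Fintype.card I))
        (Finset.univ.image x.1) D →
        ∀ y : ↥Δ.chamberSet, Finset.univ.image y.1 = D →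
        ∀ ξ η : ↥(stdSimplex ℝ I), Joined (π (x, ξ)) (π (y, η)) := by
      intro D h
      induction h with
      | refl =>
        intro y hy ξ η
        have hxy : x = y := huniq x y hy.symm
        subst hxy
        exact hjoin_chamber x ξ η
      | @tail D' D'' hprev hadj ih =>
        intro y hy ξ η
        obtain ⟨y', hy'⟩ := hfun_of_chamber _ hadj.1
        have hD'f : D' ∈ Δ.cplx.faces := hadj.1.1
        have hD''f : D'' ∈ Δ.cplx.faces := hy ▸ y.2.1
        have hinj' : Set.InjOn Δ.typ ↑D' := Δ.typ_injOn _ hD'f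
        have hinj'' : Set.InjOn Δ.typ ↑D'' := Δ.typ_injOn _ hD''f
        set S : Finset I := (D' ∩ D'').image Δ.typ with hS
        have hScard : (Finset.univ \ S).card ≤ 1 := by
          have h1 : S.card = (D' ∩ D'').card :=
            Finset.card_image_of_injOn (hinj'.mono (by
              intro v hv
              exact Finset.mem_coe.2 (Finset.mem_of_mem_inter_left (Finset.mem_coe.1 hv))))
          have h2 := hadj.2.2
          have h3 : S.card ≤ Fintype.card I := by
            simpa using Finset.card_le_univ S
          rw [Finset.card_sdiff_of_subset (Finset.subset_univ S), Finset.card_univ]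
          omega
        have hSeq : ∀ i ∈ S, y'.1 i = y.1 i := by
          intro i hi
          obtain ⟨v, hv, rfl⟩ := Finset.mem_image.1 hi
          have hv1 : v ∈ D' := Finset.mem_of_mem_inter_left hv
          have hv2 : v ∈ D'' := Finset.mem_of_mem_inter_right hv
          have hm1 : y'.1 (Δ.typ v) ∈ D' := by
            rw [← hy']
            exact Finset.mem_image_of_mem _ (Finset.mem_univ _)
          have hm2 : y.1 (Δ.typ v) ∈ D'' := by
            rw [← hy]
            exact Finset.mem_image_of_mem _ (Finset.mem_univ _)
          have e1 : y'.1 (Δ.typ v) = v := hinj' (Finset.mem_coe.2 hm1) (Finset.mem_coe.2 hv1)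
            (y'.2.2 _)
          have e2 : y.1 (Δ.typ v) = v := hinj'' (Finset.mem_coe.2 hm2) (Finset.mem_coe.2 hv2)
            (y.2.2 _)
          rw [e1, e2]
        obtain ⟨i₀, hi₀⟩ : ∃ i₀ : I, (Finset.univ \ S) ⊆ {i₀} :=
          Finset.card_le_one_iff_subset_singleton.1 hScard
        have hdiff : ∀ i, i ≠ i₀ → y'.1 i = y.1 i := by
          intro i hi
          apply hSeq
          by_contra h
          exact hi (Finset.mem_singleton.1 (hi₀ (Finset.mem_sdiff.2 ⟨Finset.mem_univ i, h⟩)))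
        exact (ih y' hy' ξ ξ).trans (hstep y' y i₀ hdiff ξ η)
    exact key _ hgal y rfl ξ η
  -- assembling
  refine ⟨Quotient.compactSpace, quotient_t2_of_isClosed_rel _ hRclosed, ?_⟩
  obtain ⟨c₀, hc₀, -⟩ := hpure.1 ∅ hempty
  obtain ⟨x₀, -⟩ := hfun_of_chamber c₀ hc₀
  refine ⟨⟨π (x₀, ⟨_, ite_eq_mem_stdSimplex ℝ (Classical.arbitrary I)⟩)⟩, ?_⟩
  intro a b
  obtain ⟨⟨xa, ξa⟩, rfl⟩ := Quotient.exists_rep a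
  obtain ⟨⟨xb, ξb⟩, rfl⟩ := Quotient.exists_rep b
  exact main xa xb ξa ξb
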